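/- For every integer n ≥ 2, the second moment of the Chatterjee permutation statistic under the uniform distribution on the symmetric group satisfies E[ξ_n(π)²] = (n−2)(4n−7)/(10(n−1)²(n+1)), i.e. (1/n!) Σ_{π ∈ S_n} ξ_n(π)² = (n−2)(4n−7)/(10(n−1)²(n+1)). -/

import Mathlib

open Finset

noncomputable section

namespace ChatterjeePerm

open Equiv

section Counting

variable {α : Type*} [Fintype α] [DecidableEq α]

lemma exists_perm_extend {k : ℕ} {f g : Fin k → α}
    (hf : Function.Injective f) (hg : Function.Injective g) :
    ∃ π : Equiv.Perm α, ∀ i, π (f i) = g i := by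
  classical
  let e : {x // x ∈ Finset.image f Finset.univ} ≃ {x // x ∈ Finset.image g Finset.univ} :=
    ((Equiv.subtypeEquivRight (by simp [Set.mem_range])).symm.trans
        (Equiv.ofInjective f hf).symm).trans
      ((Equiv.ofInjective g hg).trans (Equiv.subtypeEquivRight (by simp [Set.mem_range])))
  refine ⟨e.extendSubtype, fun i => ?_⟩
  have hmem : f i ∈ Finset.image f Finset.univ := Finset.mem_image_of_mem f (Finset.mem_univ i)
  rw [Equiv.extendSubtype_apply_of_mem e (f i) hmem]
  show ((e ⟨f i, hmem⟩ : {x // x ∈ Finset.image g Finset.univ}) : α) = g i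
  simp only [e, Equiv.trans_apply, Equiv.subtypeEquivRight_apply_coe,
    Equiv.ofInjective_apply]
  congr 1
  rw [Equiv.symm_apply_eq]
  exact Subtype.ext rfl

lemma card_stab {k : ℕ} {f : Fin k → α} (hf : Function.Injective f) :
    (Finset.univ.filter fun σ : Equiv.Perm α => ∀ i, σ (f i) = f i).card
      = (Fintype.card α - k).factorial := by
  classical
  set s : Finset α := Finset.image f Finset.univ with hs
  have hcard_s : s.card = k := by
    rw [hs, Finset.card_image_of_injective _ hf, Finset.card_univ, Fintype.card_fin]
  have e1 : Equiv.Perm {x // ¬ x ∈ s} ≃ {σ : Equiv.Perm α // ∀ a, ¬ ¬ a ∈ s → σ a = a} :=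
    Equiv.Perm.subtypeEquivSubtypePerm (fun x => ¬ x ∈ s)
  have e2 : {σ : Equiv.Perm α // ∀ a, ¬ ¬ a ∈ s → σ a = a}
      ≃ {σ : Equiv.Perm α // ∀ i, σ (f i) = f i} := by
    refine Equiv.subtypeEquivRight fun σ => ⟨fun h i => ?_, fun h a ha => ?_⟩
    · exact h (f i) (not_not_intro (Finset.mem_image_of_mem f (Finset.mem_univ i)))
    · rcases Finset.mem_image.mp (not_not.mp ha) with ⟨i, -, rfl⟩
      exact h i
  have hcount : Fintype.card {σ : Equiv.Perm α // ∀ i, σ (f i) = f i}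
      = (Fintype.card α - k).factorial := by
    rw [← Fintype.card_congr (e1.trans e2), Fintype.card_perm, Fintype.card_subtype_compl]
    congr 2
    rw [← hcard_s]
    exact Fintype.card_coe s
  rw [← hcount, Fintype.card_subtype]

lemma card_fiber {k : ℕ} {f g : Fin k → α}
    (hf : Function.Injective f) (hg : Function.Injective g) :
    (Finset.univ.filter fun π : Equiv.Perm α => ∀ i, π (f i) = g i).card
      = (Fintype.card α - k).factorial := by
  classical
  obtain ⟨π₀, hπ₀⟩ := exists_perm_extend hf hg
  rw [← card_stab hf]
  apply Finset.card_bij (fun π _ => π₀⁻¹ * π)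
  · intro π hπ
    simp only [Finset.mem_filter, Finset.mem_univ, true_and] at hπ ⊢
    intro i
    simp [Equiv.Perm.mul_apply, hπ i, ← hπ₀ i]
  · intro π hπ π' hπ' h
    simpa using congrArg (fun σ => π₀ * σ) h
  · intro σ hσ
    refine ⟨π₀ * σ, ?_, by simp [mul_assoc]⟩
    simp only [Finset.mem_filter, Finset.mem_univ, true_and] at hσ ⊢
    intro i
    simp [Equiv.Perm.mul_apply, hσ i, hπ₀ i]

lemma sum_perm_comp {k : ℕ} {f : Fin k → α} (hf : Function.Injective f)
    (F : (Fin k → α) → ℝ) :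
    ∑ π : Equiv.Perm α, F (fun i => π (f i))
      = ∑ g : Fin k → α,
          (if Function.Injective g then ((Fintype.card α - k).factorial : ℝ) else 0) * F g := by
  classical
  rw [← Finset.sum_fiberwise' Finset.univ (fun π : Equiv.Perm α => fun i => π (f i)) F]
  refine Finset.sum_congr rfl fun g _ => ?_
  rw [Finset.sum_const]
  by_cases hg : Function.Injective g
  · have : (Finset.univ.filter fun π : Equiv.Perm α => (fun i => π (f i)) = g)
        = Finset.univ.filter fun π : Equiv.Perm α => ∀ i, π (f i) = g i := by
      apply Finset.filter_congr
      intro π _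
      simp [funext_iff]
    rw [this, card_fiber hf hg, if_pos hg, nsmul_eq_mul]
  · have : (Finset.univ.filter fun π : Equiv.Perm α => (fun i => π (f i)) = g) = ∅ := by
      rw [Finset.filter_eq_empty_iff]
      intro π _ h
      exact hg (by rw [← h]; exact fun i j hij => hf (π.injective hij))
    rw [this, if_neg hg, Finset.card_empty, zero_smul, zero_mul]

end Counting

section Pi
variable {β : Type*} [Fintype β]

lemma sum_pi_succ {k : ℕ} (F : (Fin (k+1) → β) → ℝ) :
    ∑ g : Fin (k+1) → β, F g = ∑ x : β, ∑ g : Fin k → β, F (Fin.cons x g) := by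
  rw [← Equiv.sum_comp (Fin.consEquiv fun _ => β) F, Fintype.sum_prod_type]
  rfl

lemma sum_pi_zero (F : (Fin 0 → β) → ℝ) :
    ∑ g : Fin 0 → β, F g = F finZeroElim := by
  rw [Fintype.sum_unique]
  exact congrArg F (funext fun i => i.elim0)

lemma inj2 {g : Fin 2 → β} : Function.Injective g ↔ g 0 ≠ g 1 := by
  constructor
  · intro h hne
    exact absurd (h hne) (by decide)
  · intro h i j hij
    fin_cases i <;> fin_cases j <;> simp_all

lemma inj3 {g : Fin 3 → β} :
    Function.Injective g ↔ g 0 ≠ g 1 ∧ g 0 ≠ g 2 ∧ g 1 ≠ g 2 := by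
  constructor
  · intro h
    refine ⟨fun e => ?_, fun e => ?_, fun e => ?_⟩ <;> exact absurd (h e) (by decide)
  · rintro ⟨h1, h2, h3⟩ i j hij
    fin_cases i <;> fin_cases j <;> simp_all

lemma inj4 {g : Fin 4 → β} :
    Function.Injective g ↔ g 0 ≠ g 1 ∧ g 0 ≠ g 2 ∧ g 0 ≠ g 3
      ∧ g 1 ≠ g 2 ∧ g 1 ≠ g 3 ∧ g 2 ≠ g 3 := by
  constructor
  · intro h
    refine ⟨fun e => ?_, fun e => ?_, fun e => ?_, fun e => ?_, fun e => ?_, fun e => ?_⟩ <;>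
      exact absurd (h e) (by decide)
  · rintro ⟨h1, h2, h3, h4, h5, h6⟩ i j hij
    fin_cases i <;> fin_cases j <;> simp_all

end Pi

section Arity
variable {α : Type*} [Fintype α] [DecidableEq α]

lemma sum_perm2 {a b : α} (hab : a ≠ b) (F : α → α → ℝ) :
    ∑ π : Equiv.Perm α, F (π a) (π b)
      = ∑ x : α, ∑ y : α,
          (if x ≠ y then ((Fintype.card α - 2).factorial : ℝ) else 0) * F x y := by
  have hf : Function.Injective (Fin.cons a (Fin.cons b finZeroElim) : Fin 2 → α) := by
    rw [inj2]; simpa using hab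
  have h := sum_perm_comp hf (fun g => F (g 0) (g 1))
  simp only [Fin.cons_zero, Fin.cons_one] at h
  rw [h, sum_pi_succ]
  refine Finset.sum_congr rfl fun x _ => ?_
  rw [sum_pi_succ]
  refine Finset.sum_congr rfl fun y _ => ?_
  rw [sum_pi_zero]
  simp [inj2]

lemma sum_perm3 {a b c : α} (hab : a ≠ b) (hac : a ≠ c) (hbc : b ≠ c) (F : α → α → α → ℝ) :
    ∑ π : Equiv.Perm α, F (π a) (π b) (π c)
      = ∑ x : α, ∑ y : α, ∑ z : α,
          (if x ≠ y ∧ x ≠ z ∧ y ≠ z then ((Fintype.card α - 3).factorial : ℝ) else 0)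
            * F x y z := by
  have hf : Function.Injective (Fin.cons a (Fin.cons b (Fin.cons c finZeroElim)) : Fin 3 → α) := by
    rw [inj3]; refine ⟨by simpa using hab, hac, hbc⟩
  have h := sum_perm_comp hf (fun g => F (g 0) (g 1) (g 2))
  simp only [Fin.cons_zero, Fin.cons_one] at h
  rw [show ((Fin.cons a (Fin.cons b (Fin.cons c finZeroElim)) : Fin 3 → α) 2) = c from rfl] at h
  rw [h, sum_pi_succ]
  refine Finset.sum_congr rfl fun x _ => ?_
  rw [sum_pi_succ]
  refine Finset.sum_congr rfl fun y _ => ?_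
  rw [sum_pi_succ]
  refine Finset.sum_congr rfl fun z _ => ?_
  rw [sum_pi_zero]
  have e2 : (Fin.cons x (Fin.cons y (Fin.cons z finZeroElim)) : Fin 3 → α) 2 = z := rfl
  simp [inj3, e2]

lemma sum_perm4 {a b c d : α} (hab : a ≠ b) (hac : a ≠ c) (had : a ≠ d)
    (hbc : b ≠ c) (hbd : b ≠ d) (hcd : c ≠ d) (F : α → α → α → α → ℝ) :
    ∑ π : Equiv.Perm α, F (π a) (π b) (π c) (π d)
      = ∑ x : α, ∑ y : α, ∑ z : α, ∑ w : α,
          (if x ≠ y ∧ x ≠ z ∧ x ≠ w ∧ y ≠ z ∧ y ≠ w ∧ z ≠ w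
            then ((Fintype.card α - 4).factorial : ℝ) else 0) * F x y z w := by
  have hf : Function.Injective
      (Fin.cons a (Fin.cons b (Fin.cons c (Fin.cons d finZeroElim))) : Fin 4 → α) := by
    rw [inj4]
    exact ⟨by simpa using hab, hac, had,
      hbc, hbd, hcd⟩
  have h := sum_perm_comp hf (fun g => F (g 0) (g 1) (g 2) (g 3))
  simp only [Fin.cons_zero, Fin.cons_one] at h
  rw [show ((Fin.cons a (Fin.cons b (Fin.cons c (Fin.cons d finZeroElim))) : Fin 4 → α) 2)
      = c from rfl,
    show ((Fin.cons a (Fin.cons b (Fin.cons c (Fin.cons d finZeroElim))) : Fin 4 → α) 3)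
      = d from rfl] at h
  rw [h, sum_pi_succ]
  refine Finset.sum_congr rfl fun x _ => ?_
  rw [sum_pi_succ]
  refine Finset.sum_congr rfl fun y _ => ?_
  rw [sum_pi_succ]
  refine Finset.sum_congr rfl fun z _ => ?_
  rw [sum_pi_succ]
  refine Finset.sum_congr rfl fun w _ => ?_
  rw [sum_pi_zero]
  have e2 : (Fin.cons x (Fin.cons y (Fin.cons z (Fin.cons w finZeroElim))) : Fin 4 → α) 2 = z := rfl
  have e3 : (Fin.cons x (Fin.cons y (Fin.cons z (Fin.cons w finZeroElim))) : Fin 4 → α) 3 = w := rfl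
  simp [inj4, e2, e3]

end Arity

section Values

lemma sum_range_poly (n : ℕ) (c0 c1 c2 c3 c4 : ℝ) :
    ∑ i ∈ Finset.range n, (c0 + c1*(i:ℝ) + c2*(i:ℝ)^2 + c3*(i:ℝ)^3 + c4*(i:ℝ)^4)
      = c0*n + c1*((n:ℝ)*(n-1)/2) + c2*((n:ℝ)*(n-1)*(2*n-1)/6)
        + c3*((n:ℝ)^2*((n:ℝ)-1)^2/4)
        + c4*((n:ℝ)*(n-1)*(2*n-1)*(3*(n:ℝ)^2-3*n-1)/30) := by
  induction n with
  | zero => simp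
  | succ m ih =>
    rw [Finset.sum_range_succ, ih]
    push_cast
    ring

lemma sum_abs_fin (n x : ℕ) (hx : x < n) :
    ∑ y : Fin n, |(x:ℝ) - (y:ℕ)| = (x:ℝ)^2 - ((n:ℝ)-1)*x + (n:ℝ)*((n:ℝ)-1)/2 := by
  rw [Fin.sum_univ_eq_sum_range (fun v => |(x:ℝ) - (v:ℕ)|) n]
  have hsplit : ∑ y ∈ Finset.range n, |(x:ℝ) - (y:ℕ)|
      = ∑ y ∈ Finset.range (x+1), |(x:ℝ) - (y:ℕ)|
        + ∑ y ∈ Finset.Ico (x+1) n, |(x:ℝ) - (y:ℕ)| := by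
    rw [Finset.range_eq_Ico, ← Finset.sum_Ico_consecutive _ (Nat.zero_le (x+1)) hx]
    rw [Finset.range_eq_Ico]
  rw [hsplit]
  have h1 : ∑ y ∈ Finset.range (x+1), |(x:ℝ) - (y:ℕ)|
      = ∑ y ∈ Finset.range (x+1), ((x:ℝ) + (-1)*(y:ℕ) + 0*(y:ℝ)^2 + 0*(y:ℝ)^3 + 0*(y:ℝ)^4) := by
    refine Finset.sum_congr rfl fun y hy => ?_
    rw [Finset.mem_range] at hy
    rw [abs_of_nonneg (by
      have : (y:ℝ) ≤ (x:ℝ) := by exact_mod_cast Nat.lt_succ_iff.mp hy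
      linarith)]
    ring
  have h2 : ∑ y ∈ Finset.Ico (x+1) n, |(x:ℝ) - (y:ℕ)|
      = (∑ y ∈ Finset.range n, (-(x:ℝ) + 1*(y:ℕ) + 0*(y:ℝ)^2 + 0*(y:ℝ)^3 + 0*(y:ℝ)^4))
        - ∑ y ∈ Finset.range (x+1), (-(x:ℝ) + 1*(y:ℕ) + 0*(y:ℝ)^2 + 0*(y:ℝ)^3 + 0*(y:ℝ)^4) := by
    rw [← Finset.sum_Ico_eq_sub _ (by omega : x + 1 ≤ n)]
    refine Finset.sum_congr rfl fun y hy => ?_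
    rw [Finset.mem_Ico] at hy
    rw [abs_of_nonpos (by
      have : (x:ℝ) ≤ (y:ℝ) := by exact_mod_cast Nat.le_of_succ_le hy.1
      linarith)]
    ring
  rw [h1, h2, sum_range_poly, sum_range_poly, sum_range_poly]
  push_cast
  ring

lemma valA (n : ℕ) :
    ∑ x : Fin n, ∑ y : Fin n, |((x:ℕ):ℝ) - ((y:ℕ):ℝ)| = (n:ℝ)*((n:ℝ)^2-1)/3 := by
  rw [Fin.sum_univ_eq_sum_range (fun v => ∑ y : Fin n, |(v:ℝ) - ((y:ℕ):ℝ)|) n]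
  have h : ∀ v ∈ Finset.range n, (∑ y : Fin n, |(v:ℝ) - ((y:ℕ):ℝ)|)
      = ((n:ℝ)*((n:ℝ)-1)/2 + (-(((n:ℝ)-1)))*(v:ℝ) + 1*(v:ℝ)^2 + 0*(v:ℝ)^3 + 0*(v:ℝ)^4) := by
    intro v hv
    rw [sum_abs_fin n v (Finset.mem_range.mp hv)]
    ring
  rw [Finset.sum_congr rfl h, sum_range_poly]
  ring

lemma valB (n : ℕ) :
    ∑ x : Fin n, ∑ y : Fin n, (((x:ℕ):ℝ) - ((y:ℕ):ℝ))^2 = (n:ℝ)^2*((n:ℝ)^2-1)/6 := by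
  have inner : ∀ v : ℕ, ∑ y : Fin n, ((v:ℝ) - ((y:ℕ):ℝ))^2
      = (v:ℝ)^2*n + (-2*(v:ℝ))*((n:ℝ)*(n-1)/2) + 1*((n:ℝ)*(n-1)*(2*n-1)/6) := by
    intro v
    rw [Fin.sum_univ_eq_sum_range (fun y => ((v:ℝ) - (y:ℕ))^2) n]
    have h : ∀ y ∈ Finset.range n, ((v:ℝ) - (y:ℕ))^2
        = ((v:ℝ)^2 + (-2*(v:ℝ))*(y:ℝ) + 1*(y:ℝ)^2 + 0*(y:ℝ)^3 + 0*(y:ℝ)^4) := by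
      intro y _; ring
    rw [Finset.sum_congr rfl h, sum_range_poly]
    ring
  rw [Fin.sum_univ_eq_sum_range (fun v => ∑ y : Fin n, ((v:ℝ) - ((y:ℕ):ℝ))^2) n]
  have h : ∀ v ∈ Finset.range n, (∑ y : Fin n, ((v:ℝ) - ((y:ℕ):ℝ))^2)
      = ((n:ℝ)*(n-1)*(2*n-1)/6 + (-((n:ℝ)*((n:ℝ)-1)))*(v:ℝ) + ((n:ℝ))*(v:ℝ)^2
          + 0*(v:ℝ)^3 + 0*(v:ℝ)^4) := by
    intro v _
    rw [inner v]
    ring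
  rw [Finset.sum_congr rfl h, sum_range_poly]
  ring

lemma valQ (n : ℕ) :
    ∑ x : Fin n, (∑ y : Fin n, |((x:ℕ):ℝ) - ((y:ℕ):ℝ)|)^2
      = (n:ℝ)*((n:ℝ)^2-1)*(7*(n:ℝ)^2-8)/60 := by
  rw [Fin.sum_univ_eq_sum_range (fun v => (∑ y : Fin n, |(v:ℝ) - ((y:ℕ):ℝ)|)^2) n]
  have h : ∀ v ∈ Finset.range n, (∑ y : Fin n, |(v:ℝ) - ((y:ℕ):ℝ)|)^2
      = (((n:ℝ)*((n:ℝ)-1)/2)^2 + (-(((n:ℝ)-1))*((n:ℝ)*((n:ℝ)-1)))*(v:ℝ)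
          + (((n:ℝ)-1)^2 + (n:ℝ)*((n:ℝ)-1))*(v:ℝ)^2 + (-2*((n:ℝ)-1))*(v:ℝ)^3
          + 1*(v:ℝ)^4) := by
    intro v hv
    rw [sum_abs_fin n v (Finset.mem_range.mp hv)]
    ring
  rw [Finset.sum_congr rfl h, sum_range_poly]
  ring

end Values

section PermSums
variable {α : Type*} [Fintype α] [DecidableEq α]

lemma ie3 {x y z : α} (c : ℝ) (u : α → α → ℝ) (hu : ∀ p, u p p = 0) :
    (if x ≠ y ∧ x ≠ z ∧ y ≠ z then c else 0) * (u x y * u y z)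
      = c * (u x y * u y z) - c * (if x = z then u x y * u y z else 0) := by
  by_cases hxy : x = y
  · subst hxy; simp [hu]
  · by_cases hyz : y = z
    · subst hyz; simp [hu]
    · by_cases hxz : x = z
      · simp [hxy, hyz, hxz]
      · simp [hxy, hyz, hxz]

lemma ie4 {x y z w : α} (c : ℝ) (u : α → α → ℝ) (hu : ∀ p, u p p = 0) :
    (if x ≠ y ∧ x ≠ z ∧ x ≠ w ∧ y ≠ z ∧ y ≠ w ∧ z ≠ w then c else 0) * (u x y * u z w)
      = c * (u x y * u z w)
        - c * ((if x = z then u x y * u z w else 0) + (if x = w then u x y * u z w else 0)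
            + (if y = z then u x y * u z w else 0) + (if y = w then u x y * u z w else 0))
        + c * ((if x = z ∧ y = w then u x y * u z w else 0)
            + (if x = w ∧ y = z then u x y * u z w else 0)) := by
  by_cases hxy : x = y
  · subst hxy; simp [hu]
  · by_cases hzw : z = w
    · subst hzw; simp [hu]
    · by_cases h1 : x = z <;> by_cases h2 : x = w <;> by_cases h3 : y = z <;>
        by_cases h4 : y = w <;> simp_all <;> ring
end PermSums

section PermVal
variable {n : ℕ}

/-- abbreviation for the real value of a `Fin n` element -/
def fv {n : ℕ} (x : Fin n) : ℝ := ((x : ℕ) : ℝ)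

def uu {n : ℕ} (x y : Fin n) : ℝ := |fv x - fv y|

lemma uu_self (x : Fin n) : uu x x = 0 := by simp [uu]

lemma uu_comm (x y : Fin n) : uu x y = uu y x := abs_sub_comm _ _

lemma psum2a {a b : Fin n} (hab : a ≠ b) :
    ∑ π : Equiv.Perm (Fin n), uu (π a) (π b)
      = ((n-2).factorial : ℝ) * ((n:ℝ)*((n:ℝ)^2-1)/3) := by
  rw [sum_perm2 hab (fun x y => uu x y)]
  simp only [Fintype.card_fin]
  have h : ∀ x y : Fin n, (if x ≠ y then ((n-2).factorial : ℝ) else 0) * uu x y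
      = ((n-2).factorial : ℝ) * uu x y := by
    intro x y
    by_cases hxy : x = y
    · subst hxy; simp [uu_self]
    · simp [hxy]
  simp_rw [h, ← Finset.mul_sum]
  rw [show ∑ x : Fin n, ∑ y : Fin n, uu x y = (n:ℝ)*((n:ℝ)^2-1)/3 from (valA n)]

lemma psum2b {a b : Fin n} (hab : a ≠ b) :
    ∑ π : Equiv.Perm (Fin n), (fv (π a) - fv (π b))^2
      = ((n-2).factorial : ℝ) * ((n:ℝ)^2*((n:ℝ)^2-1)/6) := by
  rw [sum_perm2 hab (fun x y => (fv x - fv y)^2)]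
  simp only [Fintype.card_fin]
  have h : ∀ x y : Fin n, (if x ≠ y then ((n-2).factorial : ℝ) else 0) * (fv x - fv y)^2
      = ((n-2).factorial : ℝ) * (fv x - fv y)^2 := by
    intro x y
    by_cases hxy : x = y
    · subst hxy; simp
    · simp [hxy]
  simp_rw [h, ← Finset.mul_sum]
  rw [show ∑ x : Fin n, ∑ y : Fin n, (fv x - fv y)^2 = (n:ℝ)^2*((n:ℝ)^2-1)/6 from (valB n)]
end PermVal

section PermVal2
variable {n : ℕ}

/-- row sum -/
def gg {n : ℕ} (x : Fin n) : ℝ := ∑ y : Fin n, uu x y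

lemma hrow (x : Fin n) : ∑ z : Fin n, uu z x = gg x := by
  unfold gg; exact Finset.sum_congr rfl fun z _ => uu_comm z x

lemma valA_u : ∑ x : Fin n, gg x = (n:ℝ)*((n:ℝ)^2-1)/3 := valA n

lemma valQ_u : ∑ x : Fin n, (gg x)^2 = (n:ℝ)*((n:ℝ)^2-1)*(7*(n:ℝ)^2-8)/60 := by
  have := valQ n
  simpa [gg, uu, fv, sq] using this

lemma valB_u : ∑ x : Fin n, ∑ y : Fin n, uu x y * uu x y = (n:ℝ)^2*((n:ℝ)^2-1)/6 := by
  have h : ∀ x y : Fin n, uu x y * uu x y = (fv x - fv y)^2 := by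
    intro x y; rw [sq, ← abs_mul_abs_self (fv x - fv y)]; rfl
  simp_rw [h]
  exact valB n

lemma sum_uu_mul_gg_left : ∑ x : Fin n, ∑ y : Fin n, uu x y * gg x
    = (n:ℝ)*((n:ℝ)^2-1)*(7*(n:ℝ)^2-8)/60 := by
  rw [← valQ_u]
  refine Finset.sum_congr rfl fun x _ => ?_
  rw [← Finset.sum_mul, sq]
  rfl

lemma sum_uu_mul_gg_right : ∑ x : Fin n, ∑ y : Fin n, uu x y * gg y
    = (n:ℝ)*((n:ℝ)^2-1)*(7*(n:ℝ)^2-8)/60 := by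
  rw [Finset.sum_comm, ← valQ_u]
  refine Finset.sum_congr rfl fun y _ => ?_
  rw [← Finset.sum_mul, hrow, sq]

lemma sum_uu_mul_uu_swap : ∑ x : Fin n, ∑ y : Fin n, uu x y * uu y x
    = (n:ℝ)^2*((n:ℝ)^2-1)/6 := by
  rw [← valB_u]
  exact Finset.sum_congr rfl fun x _ => Finset.sum_congr rfl fun y _ => by
    rw [uu_comm y x]

lemma psum3 {a b c : Fin n} (hab : a ≠ b) (hac : a ≠ c) (hbc : b ≠ c) :
    ∑ π : Equiv.Perm (Fin n), uu (π a) (π b) * uu (π b) (π c)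
      = ((n-3).factorial : ℝ)
        * ((n:ℝ)*((n:ℝ)^2-1)*(7*(n:ℝ)^2-8)/60 - (n:ℝ)^2*((n:ℝ)^2-1)/6) := by
  rw [sum_perm3 hab hac hbc (fun x y z => uu x y * uu y z)]
  simp only [Fintype.card_fin]
  set c3 : ℝ := ((n-3).factorial : ℝ) with hc3
  have inner : ∀ x y : Fin n,
      ∑ z : Fin n, (if x ≠ y ∧ x ≠ z ∧ y ≠ z then c3 else 0) * (uu x y * uu y z)
        = c3 * (uu x y * gg y) - c3 * (uu x y * uu y x) := by
    intro x y
    simp_rw [ie3 c3 uu uu_self]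
    rw [Finset.sum_sub_distrib]
    congr 1
    · rw [← Finset.mul_sum]
      congr 1
      rw [← Finset.mul_sum]
      rfl
    · rw [← Finset.mul_sum, Finset.sum_ite_eq, if_pos (Finset.mem_univ x)]
  simp_rw [inner]
  simp_rw [Finset.sum_sub_distrib, ← Finset.mul_sum]
  rw [sum_uu_mul_gg_right, sum_uu_mul_uu_swap]
  ring
end PermVal2

section PermVal3
variable {n : ℕ}

lemma gg_def (z : Fin n) : (∑ w : Fin n, uu z w) = gg z := rfl

lemma psum4 {a b c d : Fin n} (hab : a ≠ b) (hac : a ≠ c) (had : a ≠ d)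
    (hbc : b ≠ c) (hbd : b ≠ d) (hcd : c ≠ d) :
    ∑ π : Equiv.Perm (Fin n), uu (π a) (π b) * uu (π c) (π d)
      = ((n-4).factorial : ℝ)
        * (((n:ℝ)*((n:ℝ)^2-1)/3)^2
            - 4*((n:ℝ)*((n:ℝ)^2-1)*(7*(n:ℝ)^2-8)/60)
            + 2*((n:ℝ)^2*((n:ℝ)^2-1)/6)) := by
  rw [sum_perm4 hab hac had hbc hbd hcd (fun x y z w => uu x y * uu z w)]
  simp only [Fintype.card_fin]
  set c4 : ℝ := ((n-4).factorial : ℝ) with hc4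
  set A : ℝ := (n:ℝ)*((n:ℝ)^2-1)/3 with hA
  have hTA : ∑ z : Fin n, gg z = A := valA_u
  have inner : ∀ x y : Fin n,
      ∑ z : Fin n, ∑ w : Fin n,
          (if x ≠ y ∧ x ≠ z ∧ x ≠ w ∧ y ≠ z ∧ y ≠ w ∧ z ≠ w then c4 else 0)
            * (uu x y * uu z w)
        = c4 * (uu x y * A) - 2*c4 * (uu x y * (gg x + gg y))
          + 2*c4 * (uu x y * uu x y) := by
    intro x y
    simp_rw [ie4 c4 uu uu_self]
    have e1 : ∀ z : Fin n, ∑ w : Fin n, (if x = z then uu x y * uu z w else 0)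
        = if x = z then uu x y * gg z else 0 := by
      intro z
      by_cases h : x = z
      · simp only [if_pos h, ← Finset.mul_sum, gg_def]
      · simp [h]
    have e2 : ∀ z : Fin n, ∑ w : Fin n, (if x = w then uu x y * uu z w else 0)
        = uu x y * uu z x := by
      intro z
      rw [Finset.sum_ite_eq, if_pos (Finset.mem_univ x)]
    have e3 : ∀ z : Fin n, ∑ w : Fin n, (if y = z then uu x y * uu z w else 0)
        = if y = z then uu x y * gg z else 0 := by
      intro z
      by_cases h : y = z
      · simp only [if_pos h, ← Finset.mul_sum, gg_def]
      · simp [h]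
    have e4 : ∀ z : Fin n, ∑ w : Fin n, (if y = w then uu x y * uu z w else 0)
        = uu x y * uu z y := by
      intro z
      rw [Finset.sum_ite_eq, if_pos (Finset.mem_univ y)]
    have e5 : ∀ z : Fin n, ∑ w : Fin n, (if x = z ∧ y = w then uu x y * uu z w else 0)
        = if x = z then uu x y * uu z y else 0 := by
      intro z
      simp_rw [ite_and]
      by_cases h : x = z
      · simp only [if_pos h]
        rw [Finset.sum_ite_eq, if_pos (Finset.mem_univ y)]
      · simp [h]
    have e6 : ∀ z : Fin n, ∑ w : Fin n, (if x = w ∧ y = z then uu x y * uu z w else 0)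
        = if y = z then uu x y * uu z x else 0 := by
      intro z
      by_cases h : y = z
      · simp only [if_pos h]
        simp_rw [show ∀ w : Fin n, (x = w ∧ y = z) = (x = w) from fun w => by simp [h]]
        rw [Finset.sum_ite_eq, if_pos (Finset.mem_univ x)]
      · simp only [if_neg h]
        simp_rw [show ∀ w : Fin n, (x = w ∧ y = z) = False from fun w => by simp [h]]
        simp
    simp only [mul_add, Finset.sum_add_distrib, Finset.sum_sub_distrib]
    simp only [← Finset.mul_sum]
    simp only [e1, e2, e3, e4, e5, e6, gg_def]
    simp only [Finset.sum_ite_eq, if_pos (Finset.mem_univ x), if_pos (Finset.mem_univ y),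
      ← Finset.mul_sum, gg_def, hTA, hrow]
    rw [uu_comm y x]
    ring
  simp only [inner, Finset.sum_add_distrib, Finset.sum_sub_distrib, ← Finset.mul_sum]
  have S_T : ∑ x : Fin n, ∑ y : Fin n, uu x y * A = A * A := by
    have h1 : ∀ x : Fin n, ∑ y : Fin n, uu x y * A = gg x * A := by
      intro x
      rw [← Finset.sum_mul, gg_def]
    simp only [h1]
    rw [← Finset.sum_mul, hTA]
  have S_mid : ∑ x : Fin n, ∑ y : Fin n, uu x y * (gg x + gg y)
      = 2 * ((n:ℝ)*((n:ℝ)^2-1)*(7*(n:ℝ)^2-8)/60) := by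
    simp only [mul_add, Finset.sum_add_distrib]
    rw [sum_uu_mul_gg_left, sum_uu_mul_gg_right]
    ring
  rw [S_T, S_mid, valB_u]
  ring
end PermVal3

section Counts

lemma cnt_diag (m : ℕ) :
    ∑ i : Fin m, ∑ j : Fin m, (if i = j then (1:ℝ) else 0) = m := by
  simp [Finset.sum_ite_eq]

lemma cnt_adj (m : ℕ) :
    ∑ i : Fin m, ∑ j : Fin m, (if j.1 = i.1 + 1 then (1:ℝ) else 0) = ((m-1 : ℕ) : ℝ) := by
  have inner : ∀ i : Fin m,
      (∑ j : Fin m, if j.1 = i.1+1 then (1:ℝ) else 0) = if i.1+1 < m then 1 else 0 := by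
    intro i
    by_cases h : i.1+1 < m
    · rw [if_pos h]
      have hcongr : ∀ j : Fin m, (if j.1 = i.1+1 then (1:ℝ) else 0)
          = (if j = ⟨i.1+1, h⟩ then (1:ℝ) else 0) := by
        intro j
        congr 1
        simp [Fin.ext_iff]
      simp_rw [hcongr]
      rw [Finset.sum_ite_eq', if_pos (Finset.mem_univ _)]
    · rw [if_neg h]
      apply Finset.sum_eq_zero
      intro j _
      rw [if_neg]
      have := j.isLt
      omega
  simp_rw [inner]
  rw [Fin.sum_univ_eq_sum_range (fun v => if v+1 < m then (1:ℝ) else 0) m]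
  rw [Finset.sum_boole]
  congr 1
  rw [show Finset.filter (fun v => v+1 < m) (Finset.range m) = Finset.range (m-1) from by
    ext v; simp; omega]
  exact Finset.card_range (m-1)

lemma cnt_adj' (m : ℕ) :
    ∑ i : Fin m, ∑ j : Fin m, (if i.1 = j.1 + 1 then (1:ℝ) else 0) = ((m-1 : ℕ) : ℝ) := by
  rw [Finset.sum_comm]
  exact cnt_adj m

end Counts

section Facts

lemma fact_expand_2 {n : ℕ} (hn : 2 ≤ n) :
    ((n.factorial : ℝ)) = (n:ℝ) * ((n:ℝ)-1) * ((n-2).factorial : ℝ) := by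
  obtain ⟨m, rfl⟩ : ∃ m, n = m + 2 := ⟨n - 2, by omega⟩
  rw [show m + 2 - 2 = m from by omega]
  rw [show (m+2).factorial = (m+2) * ((m+1) * m.factorial) from rfl]
  push_cast
  ring

lemma fact_mid {n : ℕ} (hn : 2 ≤ n) :
    ((n-3).factorial : ℝ) * (((n:ℝ)-2)
        * ((n:ℝ)*((n:ℝ)^2-1)*(7*(n:ℝ)^2-8)/60 - (n:ℝ)^2*((n:ℝ)^2-1)/6))
      = ((n-2).factorial : ℝ)
        * ((n:ℝ)*((n:ℝ)^2-1)*(7*(n:ℝ)^2-8)/60 - (n:ℝ)^2*((n:ℝ)^2-1)/6) := by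
  rcases eq_or_lt_of_le hn with h | h
  · rw [← h]
    norm_num
  · obtain ⟨m, rfl⟩ : ∃ m, n = m + 3 := ⟨n - 3, by omega⟩
    rw [show m + 3 - 3 = m from by omega, show m + 3 - 2 = m + 1 from by omega,
      Nat.factorial_succ]
    push_cast
    ring

lemma fact_far {n : ℕ} (hn : 2 ≤ n) :
    ((n-4).factorial : ℝ) * ((((n:ℝ)-2) * ((n:ℝ)-3))
        * (((n:ℝ)*((n:ℝ)^2-1)/3)^2 - 4*((n:ℝ)*((n:ℝ)^2-1)*(7*(n:ℝ)^2-8)/60)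
            + 2*((n:ℝ)^2*((n:ℝ)^2-1)/6)))
      = ((n-2).factorial : ℝ)
        * (((n:ℝ)*((n:ℝ)^2-1)/3)^2 - 4*((n:ℝ)*((n:ℝ)^2-1)*(7*(n:ℝ)^2-8)/60)
            + 2*((n:ℝ)^2*((n:ℝ)^2-1)/6)) := by
  rcases (by omega : n = 2 ∨ n = 3 ∨ 4 ≤ n) with h | h | h
  · subst h; norm_num
  · subst h; norm_num
  · obtain ⟨m, rfl⟩ : ∃ m, n = m + 4 := ⟨n - 4, by omega⟩
    rw [show m + 4 - 4 = m from by omega, show m + 4 - 2 = m + 1 + 1 from by omega,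
      Nat.factorial_succ, Nat.factorial_succ]
    push_cast
    ring

end Facts

lemma uu_sq {n : ℕ} (p q : Fin n) : uu p q * uu p q = (fv p - fv q)^2 := by
  rw [sq, ← abs_mul_abs_self (fv p - fv q)]; rfl


lemma aux_succ_lt {n : ℕ} (i : Fin (n - 1)) : i.1 + 1 < n := by
  have := i.isLt; omega

lemma aux_lt {n : ℕ} (i : Fin (n - 1)) : i.1 < n := by
  have := i.isLt; omega

/-- The sum `Σ_{i=1}^{n-1} |π(i+1) − π(i)|` of absolute consecutive differences of a
permutation `π` of `{1, …, n}` (represented on `Fin n`). -/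
def permDiffSum (n : ℕ) (π : Equiv.Perm (Fin n)) : ℝ :=
  ∑ i : Fin (n - 1),
    |((π ⟨i.1 + 1, aux_succ_lt i⟩).1 : ℝ) - ((π ⟨i.1, aux_lt i⟩).1 : ℝ)|

/-- The Chatterjee permutation statistic `ξ_n(π) = 1 − 3 Σ |π(i+1) − π(i)| / (n² − 1)`. -/
def permXi (n : ℕ) (π : Equiv.Perm (Fin n)) : ℝ :=
  1 - 3 * permDiffSum n π / ((n : ℝ) ^ 2 - 1)

/-- Lemma 2.1: for every `n ≥ 2`, the second moment of the Chatterjee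
permutation statistic under the uniform distribution on the symmetric group satisfies
`E[ξ_n(π)²] = (n−2)(4n−7)/(10(n−1)²(n+1))`. -/
theorem secondMoment_permXi (n : ℕ) (hn : 2 ≤ n) :
    (1 / (n.factorial : ℝ)) * ∑ π : Equiv.Perm (Fin n), (permXi n π) ^ 2
      = ((n : ℝ) - 2) * (4 * (n : ℝ) - 7)
        / (10 * ((n : ℝ) - 1) ^ 2 * ((n : ℝ) + 1)) := by
  classical
  have hn2 : (2:ℝ) ≤ (n:ℝ) := by exact_mod_cast hn
  have hE : ((n:ℝ)^2 - 1) ≠ 0 := by nlinarith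
  set a : Fin (n-1) → Fin n := fun i => ⟨i.1+1, aux_succ_lt i⟩ with ha
  set b : Fin (n-1) → Fin n := fun i => ⟨i.1, aux_lt i⟩ with hb
  have hD : ∀ (π : Equiv.Perm (Fin n)),
      permDiffSum n π = ∑ i : Fin (n-1), uu (π (a i)) (π (b i)) := fun π => rfl
  have hab : ∀ i : Fin (n-1), a i ≠ b i := by
    intro i
    refine Fin.ne_of_val_ne ?_
    show i.1 + 1 ≠ i.1
    omega
  -- first moment
  have hS1 : ∑ π : Equiv.Perm (Fin n), permDiffSum n π
      = ((n-1:ℕ):ℝ) * (((n-2).factorial:ℝ) * ((n:ℝ)*((n:ℝ)^2-1)/3)) := by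
    simp_rw [hD]
    rw [Finset.sum_comm]
    rw [Finset.sum_congr rfl (fun i _ => psum2a (hab i))]
    rw [Finset.sum_const, Finset.card_univ, Fintype.card_fin, nsmul_eq_mul]
  -- key pairwise computation
  have key : ∀ i j : Fin (n-1),
      (∑ π : Equiv.Perm (Fin n), uu (π (a i)) (π (b i)) * uu (π (a j)) (π (b j)))
        = if i = j then ((n-2).factorial:ℝ) * ((n:ℝ)^2*((n:ℝ)^2-1)/6)
          else if j.1 = i.1+1 ∨ i.1 = j.1+1 then
            ((n-3).factorial : ℝ)
              * ((n:ℝ)*((n:ℝ)^2-1)*(7*(n:ℝ)^2-8)/60 - (n:ℝ)^2*((n:ℝ)^2-1)/6)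
          else ((n-4).factorial : ℝ)
              * (((n:ℝ)*((n:ℝ)^2-1)/3)^2
                  - 4*((n:ℝ)*((n:ℝ)^2-1)*(7*(n:ℝ)^2-8)/60)
                  + 2*((n:ℝ)^2*((n:ℝ)^2-1)/6)) := by
    intro i j
    by_cases h1 : i = j
    · subst h1
      rw [if_pos rfl]
      rw [Finset.sum_congr rfl (fun π _ => uu_sq (π (a i)) (π (b i)))]
      exact psum2b (hab i)
    · rw [if_neg h1]
      have hij : i.1 ≠ j.1 := fun hh => h1 (Fin.ext hh)
      by_cases h2 : j.1 = i.1+1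
      · rw [if_pos (Or.inl h2)]
        have hbj : b j = a i := Fin.ext h2
        have hpt : ∀ π : Equiv.Perm (Fin n),
            uu (π (a i)) (π (b i)) * uu (π (a j)) (π (b j))
              = uu (π (b i)) (π (a i)) * uu (π (a i)) (π (a j)) := by
          intro π
          rw [hbj, uu_comm (π (a i)) (π (b i)), uu_comm (π (a j)) (π (a i))]
        rw [Finset.sum_congr rfl (fun π _ => hpt π)]
        refine psum3 ?_ ?_ ?_
        · exact Fin.ne_of_val_ne (by show i.1 ≠ i.1+1; omega)
        · exact Fin.ne_of_val_ne (by show i.1 ≠ j.1+1; omega)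
        · exact Fin.ne_of_val_ne (by show i.1+1 ≠ j.1+1; omega)
      · by_cases h3 : i.1 = j.1+1
        · rw [if_pos (Or.inr h3)]
          have hbi : b i = a j := Fin.ext h3
          have hpt : ∀ π : Equiv.Perm (Fin n),
              uu (π (a i)) (π (b i)) * uu (π (a j)) (π (b j))
                = uu (π (b j)) (π (a j)) * uu (π (a j)) (π (a i)) := by
            intro π
            rw [hbi, uu_comm (π (a j)) (π (b j)), uu_comm (π (a i)) (π (a j)), mul_comm]
          rw [Finset.sum_congr rfl (fun π _ => hpt π)]
          refine psum3 ?_ ?_ ?_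
          · exact Fin.ne_of_val_ne (by show j.1 ≠ j.1+1; omega)
          · exact Fin.ne_of_val_ne (by show j.1 ≠ i.1+1; omega)
          · exact Fin.ne_of_val_ne (by show j.1+1 ≠ i.1+1; omega)
        · rw [if_neg (by tauto)]
          refine psum4 ?_ ?_ ?_ ?_ ?_ ?_
          · exact Fin.ne_of_val_ne (by show i.1+1 ≠ i.1; omega)
          · exact Fin.ne_of_val_ne (by show i.1+1 ≠ j.1+1; omega)
          · exact Fin.ne_of_val_ne (by show i.1+1 ≠ j.1; omega)
          · exact Fin.ne_of_val_ne (by show i.1 ≠ j.1+1; omega)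
          · exact Fin.ne_of_val_ne (by show i.1 ≠ j.1; omega)
          · exact Fin.ne_of_val_ne (by show j.1+1 ≠ j.1; omega)
  set C2 : ℝ := ((n-2).factorial:ℝ) * ((n:ℝ)^2*((n:ℝ)^2-1)/6) with hC2
  set C3 : ℝ := ((n-3).factorial : ℝ)
    * ((n:ℝ)*((n:ℝ)^2-1)*(7*(n:ℝ)^2-8)/60 - (n:ℝ)^2*((n:ℝ)^2-1)/6) with hC3
  set C4 : ℝ := ((n-4).factorial : ℝ)
    * (((n:ℝ)*((n:ℝ)^2-1)/3)^2 - 4*((n:ℝ)*((n:ℝ)^2-1)*(7*(n:ℝ)^2-8)/60)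
        + 2*((n:ℝ)^2*((n:ℝ)^2-1)/6)) with hC4
  have split : ∀ i j : Fin (n-1),
      (if i = j then C2 else if j.1 = i.1+1 ∨ i.1 = j.1+1 then C3 else C4)
        = C4 + (C2 - C4) * (if i = j then (1:ℝ) else 0)
          + (C3 - C4) * ((if j.1 = i.1+1 then (1:ℝ) else 0)
              + (if i.1 = j.1+1 then (1:ℝ) else 0)) := by
    intro i j
    by_cases h1 : i = j
    · subst h1
      have h2 : ¬ (i.1 = i.1+1) := by omega
      rw [if_pos rfl, if_pos rfl, if_neg h2]
      ring
    · rw [if_neg h1, if_neg h1]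
      by_cases h2 : j.1 = i.1+1
      · have h3 : ¬ i.1 = j.1+1 := by omega
        rw [if_pos (Or.inl h2), if_pos h2, if_neg h3]
        ring
      · by_cases h3 : i.1 = j.1+1
        · rw [if_pos (Or.inr h3), if_neg h2, if_pos h3]
          ring
        · rw [if_neg (by tauto), if_neg h2, if_neg h3]
          ring
  have hS2 : ∑ π : Equiv.Perm (Fin n), (permDiffSum n π)^2
      = ((n-1:ℕ):ℝ) * (((n-1:ℕ):ℝ) * C4) + (C2 - C4) * ((n-1:ℕ):ℝ)
        + (C3 - C4) * (((n-1-1:ℕ):ℝ) + ((n-1-1:ℕ):ℝ)) := by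
    have e1 : ∀ π : Equiv.Perm (Fin n), (permDiffSum n π)^2
        = ∑ i : Fin (n-1), ∑ j : Fin (n-1),
            uu (π (a i)) (π (b i)) * uu (π (a j)) (π (b j)) := by
      intro π
      rw [hD, sq, Finset.sum_mul_sum]
    rw [Finset.sum_congr rfl (fun π _ => e1 π)]
    rw [Finset.sum_comm]
    rw [Finset.sum_congr rfl (fun i _ => Finset.sum_comm)]
    rw [Finset.sum_congr rfl (fun i _ => Finset.sum_congr rfl (fun j _ => key i j))]
    rw [Finset.sum_congr rfl (fun i _ => Finset.sum_congr rfl (fun j _ => split i j))]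
    simp only [Finset.sum_add_distrib, ← Finset.mul_sum]
    rw [cnt_diag (n-1), cnt_adj (n-1), cnt_adj' (n-1)]
    simp only [Finset.sum_const, Finset.card_univ, Fintype.card_fin, nsmul_eq_mul]
  -- cast cleanups
  have c1 : ((n-1:ℕ):ℝ) = (n:ℝ) - 1 := by
    push_cast [Nat.cast_sub (show 1 ≤ n by omega)]
    ring
  have c2' : ((n-1-1:ℕ):ℝ) = (n:ℝ) - 2 := by
    rw [show n-1-1 = n-2 from by omega]
    push_cast [Nat.cast_sub hn]
    ring
  have e3 := fact_mid hn
  have e4 := fact_far hn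
  have hS2' : ∑ π : Equiv.Perm (Fin n), (permDiffSum n π)^2
      = ((n-2).factorial:ℝ)
        * (((n:ℝ)-1) * ((n:ℝ)^2*((n:ℝ)^2-1)/6)
          + 2 * ((n:ℝ)*((n:ℝ)^2-1)*(7*(n:ℝ)^2-8)/60 - (n:ℝ)^2*((n:ℝ)^2-1)/6)
          + (((n:ℝ)*((n:ℝ)^2-1)/3)^2 - 4*((n:ℝ)*((n:ℝ)^2-1)*(7*(n:ℝ)^2-8)/60)
              + 2*((n:ℝ)^2*((n:ℝ)^2-1)/6))) := by
    rw [hS2, c1, c2', hC2, hC3, hC4]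
    linear_combination 2 * e3 + e4
  have hXi : ∀ π : Equiv.Perm (Fin n), (permXi n π)^2
      = 1 - (6/((n:ℝ)^2-1)) * permDiffSum n π
        + (9/(((n:ℝ)^2-1)^2)) * (permDiffSum n π)^2 := by
    intro π
    unfold permXi
    field_simp
    ring
  rw [Finset.sum_congr rfl (fun π _ => hXi π)]
  rw [Finset.sum_add_distrib, Finset.sum_sub_distrib, ← Finset.mul_sum, ← Finset.mul_sum]
  rw [Finset.sum_const, Finset.card_univ, nsmul_eq_mul, mul_one,
    Fintype.card_perm, Fintype.card_fin]
  rw [hS1, hS2', c1, fact_expand_2 hn]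
  have F2ne : ((n-2).factorial:ℝ) ≠ 0 := Nat.cast_ne_zero.mpr (Nat.factorial_ne_zero _)
  have hxne : (n:ℝ) ≠ 0 := by linarith
  have hx1ne : (n:ℝ) - 1 ≠ 0 := by linarith
  have hx1ne' : (n:ℝ) + 1 ≠ 0 := by linarith
  field_simp
  ring

end ChatterjeePerm
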